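/- arXiv:2010.02476 — 2 statements merged into one kernel-verified Lean document; each statement's English description precedes it below -/
import Mathlib

section
/- For every real p ≥ 1 and all real numbers a, b, one has | |a|^p − |b|^p | ≤ p 2^p ( |a − b| |b|^{p−1} + |a − b|^p ). -/
open MeasureTheory ProbabilityTheory Filter Set Topology

noncomputable section

variable {Ω : Type*} [MeasurableSpace Ω]

/-- A real-indexed process is (mean-zero) Gaussian on the index set `T`: every finite
linear combination of its values has a centred Gaussian distribution. -/
def IsGaussianOn (P : Measure Ω) (W : Ω → ℝ → ℝ) (T : Set ℝ) : Prop :=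
  ∀ (n : ℕ) (t : Fin n → ℝ), (∀ i, t i ∈ T) → ∀ c : Fin n → ℝ,
    ∃ v : NNReal, P.map (fun ω => ∑ i, c i * W ω (t i)) = gaussianReal 0 v

/-- A standard Wiener process on the index set `T ⊆ [0,∞)`. -/
structure IsWienerProcessOn (P : Measure Ω) (W : Ω → ℝ → ℝ) (T : Set ℝ) : Prop where
  meas : ∀ t ∈ T, Measurable fun ω => W ω t
  gauss : IsGaussianOn P W T
  cont : ∀ᵐ ω ∂P, ContinuousOn (W ω) T
  zero : ∀ᵐ ω ∂P, W ω 0 = 0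
  cov : ∀ s ∈ T, ∀ t ∈ T, ∫ ω, W ω s * W ω t ∂P = min s t

/-- A Brownian bridge on `[0,1]`. -/
structure IsBrownianBridge (P : Measure Ω) (B : Ω → ℝ → ℝ) : Prop where
  meas : ∀ t ∈ Icc (0:ℝ) 1, Measurable fun ω => B ω t
  gauss : IsGaussianOn P B (Icc 0 1)
  cont : ∀ᵐ ω ∂P, ContinuousOn (B ω) (Icc 0 1)
  cov : ∀ s ∈ Icc (0:ℝ) 1, ∀ t ∈ Icc (0:ℝ) 1,
    ∫ ω, B ω s * B ω t ∂P = min s t - s * t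

/-- `ξ_N = O_P(1)`: bounded in probability. -/
def IsBddInProb (P : Measure Ω) (ξ : ℕ → Ω → ℝ) : Prop :=
  ∀ ε : ℝ, 0 < ε → ∃ M : ℝ, ∀ N, P {ω | M < |ξ N ω|} ≤ ENNReal.ofReal ε

/-- `ξ_N = O_P(a_N)`. -/
def IsOP (P : Measure Ω) (ξ : ℕ → Ω → ℝ) (a : ℕ → ℝ) : Prop :=
  IsBddInProb P (fun N ω => ξ N ω / a N)

/-- Assumption 1: strong approximation of the partial sums of the errors by two
independent Wiener processes, with rate exponent `ζ < 1/2` and scale `σ > 0`. -/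
structure Assumption1 (P : Measure Ω) (eps : ℕ → Ω → ℝ)
    (σ ζ : ℝ) (W1 W2 : ℕ → Ω → ℝ → ℝ) : Prop where
  hσ : 0 < σ
  hζ : ζ < 1/2
  wiener1 : ∀ N : ℕ, IsWienerProcessOn P (W1 N) (Icc 0 ((N:ℝ)/2))
  wiener2 : ∀ N : ℕ, IsWienerProcessOn P (W2 N) (Icc 0 ((N:ℝ)/2))
  indep : ∀ N : ℕ, IndepFun (W1 N) (W2 N) P
  approx1 : IsBddInProb P (fun N ω =>
    ⨆ k : {k : ℕ // 1 ≤ k ∧ (k:ℝ) ≤ (N:ℝ)/2},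
      ((k:ℕ):ℝ) ^ (-ζ) *
        |(∑ i ∈ Finset.Icc 1 (k:ℕ), eps i ω) - σ * W1 N ω ((k:ℕ):ℝ)|)
  approx2 : IsBddInProb P (fun N ω =>
    ⨆ k : {k : ℕ // (N:ℝ)/2 < (k:ℝ) ∧ (k:ℕ) < N},
      ((N:ℝ) - ((k:ℕ):ℝ)) ^ (-ζ) *
        |(∑ i ∈ Finset.Icc ((k:ℕ)+1) N, eps i ω) - σ * W2 N ω ((N:ℝ) - ((k:ℕ):ℝ))|)

/-- The normalized CUSUM process `Z_N(t) = N^{-1/2} (Σ_{i≤⌊(N+1)t⌋} X_i − (⌊(N+1)t⌋/N) Σ_{i≤N} X_i)`. -/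
def cusum (X : ℕ → Ω → ℝ) (N : ℕ) (ω : Ω) (t : ℝ) : ℝ :=
  (Real.sqrt N)⁻¹ * ((∑ i ∈ Finset.Icc 1 ⌊((N:ℝ) + 1) * t⌋₊, X i ω)
    - (⌊((N:ℝ) + 1) * t⌋₊ : ℝ) / (N:ℝ) * ∑ i ∈ Finset.Icc 1 N, X i ω)

/-- Convergence in distribution of real random variables to the law `μ`. -/
def TendstoInDist (P : Measure Ω) (ξ : ℕ → Ω → ℝ) (μ : Measure ℝ) : Prop :=
  ∀ f : BoundedContinuousFunction ℝ ℝ,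
    Tendsto (fun N => ∫ ω, f (ξ N ω) ∂P) atTop (𝓝 (∫ x, f x ∂μ))

/-- The standard normal density. -/
def stdNormalDensity (x : ℝ) : ℝ := (Real.sqrt (2 * Real.pi))⁻¹ * Real.exp (-x^2 / 2)

/-- `b(p) = ∫ |x|^p φ(x) dx`. -/
def bConst (p : ℝ) : ℝ := ∫ x : ℝ, |x| ^ p * stdNormalDensity x

/-- The constant `a(p)` from the paper. -/
def aConst (p : ℝ) : ℝ :=
  ∫ u : ℝ, ∫ y : ℝ, ∫ x : ℝ, |x * y| ^ p *
    ((2 * Real.pi * Real.sqrt (1 - Real.exp (-2 * |u|)))⁻¹ *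
        Real.exp (-(x^2 + y^2 - 2 * Real.exp (-|u|) * |x * y|) /
          (2 * (1 - Real.exp (-2 * |u|))))
      - stdNormalDensity x * stdNormalDensity y)


private lemma key6 {p : ℝ} (hp : 1 ≤ p) {x y : ℝ} (hy : 0 ≤ y) (hxy : y ≤ x) :
    x ^ p - y ^ p ≤ p * x ^ (p - 1) * (x - y) := by
  rcases eq_or_lt_of_le (hy.trans hxy) with h | hx
  · have hy0 : y = 0 := le_antisymm (hxy.trans_eq h.symm) hy
    subst hy0; rw [← h]; simp
  · set s : ℝ := (y - x) / x with hs
    have hs1 : -1 ≤ s := by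
      rw [hs, le_div_iff₀ hx]; nlinarith
    have hb := one_add_mul_self_le_rpow_one_add hs1 hp
    have h1s : 1 + s = y / x := by
      rw [hs, eq_div_iff hx.ne', add_mul, div_mul_cancel₀ _ hx.ne']; ring
    rw [h1s, Real.div_rpow hy hx.le] at hb
    have hxp : (0:ℝ) < x ^ p := Real.rpow_pos_of_pos hx p
    rw [le_div_iff₀ hxp] at hb
    have hxpp : x ^ p = x ^ (p - 1) * x := by
      rw [← Real.rpow_add_one hx.ne' (p-1)]; ring_nf
    have hsx : s * x = y - x := by rw [hs, div_mul_cancel₀ _ hx.ne']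
    have hsxp : s * x ^ p = (y - x) * x ^ (p - 1) := by rw [hxpp, ← hsx]; ring
    nlinarith [hb, hsxp]

private lemma key6' {p : ℝ} (hp : 1 ≤ p) {x y : ℝ} (hx : 0 ≤ x) (hy : 0 ≤ y) :
    |x ^ p - y ^ p| ≤ p * (max x y) ^ (p - 1) * |x - y| := by
  rcases le_total y x with h | h
  · rw [max_eq_left h, abs_of_nonneg (sub_nonneg.2 (Real.rpow_le_rpow hy h (by linarith))),
      abs_of_nonneg (sub_nonneg.2 h)]
    exact key6 hp hy h
  · rw [max_eq_right h, abs_sub_comm, abs_sub_comm x y,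
      abs_of_nonneg (sub_nonneg.2 (Real.rpow_le_rpow hx h (by linarith))),
      abs_of_nonneg (sub_nonneg.2 h)]
    exact key6 hp hx h

/-- The elementary inequality `||a|^p − |b|^p| ≤ p 2^p (|a−b| |b|^{p−1} + |a−b|^p)`. -/
theorem statement6 (p : ℝ) (hp : 1 ≤ p) (a b : ℝ) :
    |(|a| ^ p - |b| ^ p)| ≤ p * 2 ^ p * (|a - b| * |b| ^ (p - 1) + |a - b| ^ p) := by
  rcases eq_or_ne a b with rfl | hab
  · simp
    positivity
  set x := |a|; set y := |b|; set d := |a - b| with hd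
  have hx : 0 ≤ x := abs_nonneg a
  have hy : 0 ≤ y := abs_nonneg b
  have hd0 : 0 < d := abs_pos.2 (sub_ne_zero.2 hab)
  have hp1 : 0 ≤ p - 1 := by linarith
  have hxy : |x - y| ≤ d := abs_abs_sub_abs_le_abs_sub a b
  have hmax : max x y ≤ y + d := by
    refine max_le ?_ (by linarith)
    calc x = |b + (a - b)| := by norm_num [x]
    _ ≤ y + d := abs_add_le b (a - b)
  have hpos : (0:ℝ) ≤ p := by linarith
  have h1 : |x ^ p - y ^ p| ≤ p * (y + d) ^ (p - 1) * d := by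
    refine (key6' hp hx hy).trans ?_
    have hm := Real.rpow_le_rpow (le_max_of_le_left hx) hmax hp1
    exact mul_le_mul (mul_le_mul_of_nonneg_left hm hpos) hxy (abs_nonneg _)
      (by positivity)
  have h2 : (y + d) ^ (p - 1) ≤ 2 ^ (p - 1) * (y ^ (p - 1) + d ^ (p - 1)) := by
    have hyd : y + d ≤ 2 * max y d := by
      rcases le_total y d with h | h
      · rw [max_eq_right h]; linarith
      · rw [max_eq_left h]; linarith
    calc (y + d) ^ (p - 1) ≤ (2 * max y d) ^ (p - 1) :=
          Real.rpow_le_rpow (by linarith) hyd hp1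
    _ = 2 ^ (p - 1) * (max y d) ^ (p - 1) := Real.mul_rpow (by norm_num) (le_max_of_le_right hd0.le)
    _ ≤ 2 ^ (p - 1) * (y ^ (p - 1) + d ^ (p - 1)) := by
        gcongr
        rcases le_total y d with h | h
        · rw [max_eq_right h]
          nlinarith [Real.rpow_nonneg hy (p - 1)]
        · rw [max_eq_left h]
          nlinarith [Real.rpow_nonneg hd0.le (p - 1)]
  have hdp : d * d ^ (p - 1) = d ^ p := by
    have h := Real.rpow_add hd0 1 (p - 1)
    rw [Real.rpow_one] at h
    rw [← h]; ring_nf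
  have h3 : |x ^ p - y ^ p| ≤ p * 2 ^ (p - 1) * (d * y ^ (p - 1) + d ^ p) := by
    calc |x ^ p - y ^ p| ≤ p * (2 ^ (p - 1) * (y ^ (p - 1) + d ^ (p - 1))) * d := by
          refine h1.trans ?_
          exact mul_le_mul_of_nonneg_right (mul_le_mul_of_nonneg_left h2 hpos) hd0.le
    _ = p * 2 ^ (p - 1) * (d * y ^ (p - 1) + d * d ^ (p - 1)) := by ring
    _ = p * 2 ^ (p - 1) * (d * y ^ (p - 1) + d ^ p) := by rw [hdp]
  refine h3.trans ?_
  have h4 : (2:ℝ) ^ (p - 1) ≤ 2 ^ p :=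
    Real.rpow_le_rpow_of_exponent_le one_le_two (by linarith)
  have hS : 0 ≤ d * y ^ (p - 1) + d ^ p := by positivity
  calc p * 2 ^ (p - 1) * (d * y ^ (p - 1) + d ^ p)
      ≤ p * 2 ^ p * (d * y ^ (p - 1) + d ^ p) := by
        exact mul_le_mul_of_nonneg_right (mul_le_mul_of_nonneg_left h4 hpos) hS
  _ = p * 2 ^ p * (d * y ^ (p - 1) + d ^ p) := rfl

end
end

section
/- Let p ≥ 1 and κ > p/2 + 1. Then lim_{u → 0+} u^{κ−p/2−1} ∫_{u log(1/u)}^{1/2} (t(1−t))^{p/2−κ} dt = 0. -/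
open MeasureTheory ProbabilityTheory Filter Set Topology

noncomputable section

variable {Ω : Type*} [MeasurableSpace Ω]

/-- `lim_{u→0+} u^{κ−p/2−1} ∫_{u log(1/u)}^{1/2} (t(1−t))^{p/2−κ} dt = 0`. -/
theorem statement14 (p κ : ℝ) (hp : 1 ≤ p) (hκ : p/2 + 1 < κ) :
    Tendsto
      (fun u : ℝ => u ^ (κ - p/2 - 1) *
        ∫ t in Ioc (u * Real.log (1/u)) (1/2 : ℝ), (t * (1 - t)) ^ (p/2 - κ))
      (𝓝[>] (0:ℝ)) (𝓝 0) := by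
  have hs : 0 < κ - p/2 - 1 := by linarith
  set s := κ - p/2 - 1 with hsdef
  -- the dominating function
  have hlim : Tendsto (fun u : ℝ => (2:ℝ)^(κ - p/2)/s * (Real.log (1/u)) ^ (-s))
      (𝓝[>] (0:ℝ)) (𝓝 0) := by
    have h1 : Tendsto (fun u : ℝ => Real.log (1/u)) (𝓝[>] (0:ℝ)) atTop := by
      have := Real.tendsto_log_nhdsGT_zero
      have h2 : Tendsto (fun u : ℝ => -Real.log u) (𝓝[>] (0:ℝ)) atTop :=
        tendsto_neg_atBot_atTop.comp this
      refine h2.congr fun u => ?_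
      rw [one_div, Real.log_inv]
    have h3 : Tendsto (fun x : ℝ => x ^ (-s)) atTop (𝓝 0) :=
      tendsto_rpow_neg_atTop hs
    have := (h3.comp h1).const_mul ((2:ℝ)^(κ - p/2)/s)
    simpa using this
  -- eventual hypotheses
  have hev : ∀ᶠ u in 𝓝[>] (0:ℝ), 0 < u ∧ u < 1 ∧
      0 < u * Real.log (1/u) ∧ u * Real.log (1/u) < 1/2 := by
    have hmem : ∀ᶠ u in 𝓝[>] (0:ℝ), 0 < u := eventually_mem_nhdsWithin
    have hlt1 : ∀ᶠ u in 𝓝[>] (0:ℝ), u < 1 :=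
      eventually_nhdsWithin_of_eventually_nhds (eventually_lt_nhds one_pos)
    have hsmall : Tendsto (fun u : ℝ => u * Real.log (1/u)) (𝓝[>] (0:ℝ)) (𝓝 0) := by
      have := tendsto_log_mul_rpow_nhdsGT_zero zero_lt_one
      have h := this.neg
      simp only [neg_zero] at h
      refine h.congr fun u => ?_
      rw [one_div, Real.log_inv, Real.rpow_one]; ring
    have hlt2 : ∀ᶠ u in 𝓝[>] (0:ℝ), u * Real.log (1/u) < 1/2 :=
      hsmall.eventually (eventually_lt_nhds (by norm_num))
    filter_upwards [hmem, hlt1, hlt2] with u h0 h1 h2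
    refine ⟨h0, h1, ?_, h2⟩
    have : 0 < Real.log (1/u) := Real.log_pos (by rw [one_div]; exact (one_lt_inv₀ h0).mpr h1)
    exact mul_pos h0 this
  refine squeeze_zero' ?_ ?_ hlim
  · filter_upwards [hev] with u ⟨h0, h1, ha, hb⟩
    have : 0 ≤ ∫ t in Ioc (u * Real.log (1/u)) (1/2 : ℝ), (t * (1 - t)) ^ (p/2 - κ) := by
      apply setIntegral_nonneg measurableSet_Ioc
      intro t ht
      have ht0 : 0 < t := lt_trans ha ht.1
      have ht1 : t ≤ 1/2 := ht.2
      exact Real.rpow_nonneg (by nlinarith) _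
    exact mul_nonneg (Real.rpow_nonneg h0.le _) this
  · filter_upwards [hev] with u ⟨h0, h1, ha, hb⟩
    have hL : (0:ℝ) ≤ Real.log (1/u) :=
      le_of_lt (Real.log_pos (by rw [one_div]; exact (one_lt_inv₀ h0).mpr h1))
    set a := u * Real.log (1/u) with hadef
    have hus : (0:ℝ) ≤ u ^ s := Real.rpow_nonneg h0.le s
    -- bound the integral
    have key : (∫ t in Ioc a (1/2 : ℝ), (t * (1 - t)) ^ (p/2 - κ))
        ≤ (2:ℝ)^(κ - p/2) * (a ^ (-s) / s) := by
      have hcont1 : ContinuousOn (fun t : ℝ => (t * (1 - t)) ^ (p/2 - κ)) (Icc a (1/2)) := by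
        apply ContinuousOn.rpow_const
        · exact (continuousOn_id.mul (continuousOn_const.sub continuousOn_id))
        · intro t ht
          left
          have ht0 : 0 < t := lt_of_lt_of_le ha ht.1
          have ht1 : t ≤ 1/2 := ht.2
          exact ne_of_gt (by nlinarith)
      have hcont2 : ContinuousOn (fun t : ℝ => (2:ℝ)^(κ - p/2) * t ^ (p/2 - κ)) (Icc a (1/2)) := by
        apply ContinuousOn.mul continuousOn_const
        apply ContinuousOn.rpow_const continuousOn_id
        intro t ht
        exact Or.inl (ne_of_gt (lt_of_lt_of_le ha ht.1))
      have hint1 : IntegrableOn (fun t : ℝ => (t * (1 - t)) ^ (p/2 - κ)) (Ioc a (1/2)) :=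
        (hcont1.integrableOn_Icc).mono_set Ioc_subset_Icc_self
      have hint2 : IntegrableOn (fun t : ℝ => (2:ℝ)^(κ - p/2) * t ^ (p/2 - κ)) (Ioc a (1/2)) :=
        (hcont2.integrableOn_Icc).mono_set Ioc_subset_Icc_self
      have step1 : (∫ t in Ioc a (1/2 : ℝ), (t * (1 - t)) ^ (p/2 - κ))
          ≤ ∫ t in Ioc a (1/2 : ℝ), (2:ℝ)^(κ - p/2) * t ^ (p/2 - κ) := by
        apply setIntegral_mono_on hint1 hint2 measurableSet_Ioc
        intro t ht
        have ht0 : 0 < t := lt_trans ha ht.1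
        have ht1 : t ≤ 1/2 := ht.2
        have h1t : (0:ℝ) < 1 - t := by linarith
        rw [Real.mul_rpow ht0.le h1t.le]
        have hle : (1 - t) ^ (p/2 - κ) ≤ ((1:ℝ)/2) ^ (p/2 - κ) :=
          Real.rpow_le_rpow_of_nonpos (by norm_num) (by linarith) (by linarith)
        have h2 : ((1:ℝ)/2) ^ (p/2 - κ) = (2:ℝ)^(κ - p/2) := by
          rw [one_div, Real.inv_rpow (by norm_num), ← Real.rpow_neg (by norm_num)]
          congr 1; ring
        calc t ^ (p/2 - κ) * (1 - t) ^ (p/2 - κ)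
            ≤ t ^ (p/2 - κ) * ((1:ℝ)/2) ^ (p/2 - κ) := by
              apply mul_le_mul_of_nonneg_left hle (Real.rpow_nonneg ht0.le _)
          _ = (2:ℝ)^(κ - p/2) * t ^ (p/2 - κ) := by rw [h2]; ring
      have step2 : (∫ t in Ioc a (1/2 : ℝ), t ^ (p/2 - κ)) ≤ a ^ (-s) / s := by
        have heq : (∫ t in Ioc a (1/2 : ℝ), t ^ (p/2 - κ))
            = ∫ t in a..(1/2:ℝ), t ^ (p/2 - κ) := by
          rw [intervalIntegral.integral_of_le hb.le]
        have hne : p/2 - κ ≠ -1 := by intro h; rw [hsdef] at hs; linarith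
        rw [heq, integral_rpow (Or.inr ⟨hne,
          by rw [Set.uIcc_of_le hb.le]; intro h; exact absurd h.1 (not_le.mpr ha)⟩)]
        have hexp : p/2 - κ + 1 = -s := by rw [hsdef]; ring
        rw [hexp]
        have heq2 : (((1:ℝ)/2) ^ (-s) - a ^ (-s)) / (-s) = (a ^ (-s) - ((1:ℝ)/2) ^ (-s)) / s := by
          rw [div_neg, ← neg_div, neg_sub]
        rw [heq2]
        have h12 : (0:ℝ) ≤ ((1:ℝ)/2) ^ (-s) := Real.rpow_nonneg (by norm_num) _
        gcongr
        linarith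
      calc (∫ t in Ioc a (1/2 : ℝ), (t * (1 - t)) ^ (p/2 - κ))
          ≤ ∫ t in Ioc a (1/2 : ℝ), (2:ℝ)^(κ - p/2) * t ^ (p/2 - κ) := step1
        _ = (2:ℝ)^(κ - p/2) * ∫ t in Ioc a (1/2 : ℝ), t ^ (p/2 - κ) := by
            rw [integral_const_mul]
        _ ≤ (2:ℝ)^(κ - p/2) * (a ^ (-s) / s) := by
            apply mul_le_mul_of_nonneg_left step2 (Real.rpow_nonneg (by norm_num) _)
    calc u ^ s * (∫ t in Ioc a (1/2 : ℝ), (t * (1 - t)) ^ (p/2 - κ))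
        ≤ u ^ s * ((2:ℝ)^(κ - p/2) * (a ^ (-s) / s)) :=
          mul_le_mul_of_nonneg_left key hus
      _ = (2:ℝ)^(κ - p/2)/s * (Real.log (1/u)) ^ (-s) := by
          rw [hadef, Real.mul_rpow h0.le hL]
          rw [Real.rpow_neg h0.le]
          field_simp


end
end
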